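/- For every integer z ≥ 3, the Coxeter–Schläfli matrix M(2z,2z,2z) is invertible, and its inverse N = M(2z,2z,2z)⁻¹ satisfies N₀₀ > 0, N₃₃ > 0, N₁₁ < 0 and N₂₂ < 0. (Geometrically: the vertices A₀ and A₃ of the orthoscheme O(2z) are outer points of hyperbolic space and must be truncated by their polar planes, while A₁ and A₂ are proper points.) -/

import Mathlib

open Real Matrix

/-- The Coxeter–Schläfli matrix `M(u,v,w)`. -/
noncomputable def coxeterSchlafli (u v w : ℕ) : Matrix (Fin 4) (Fin 4) ℝ :=
  !![1, -Real.cos (π / u), 0, 0;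
     -Real.cos (π / u), 1, -Real.cos (π / v), 0;
     0, -Real.cos (π / v), 1, -Real.cos (π / w);
     0, 0, -Real.cos (π / w), 1]

private lemma cox_det (u : ℕ) :
    (coxeterSchlafli u u u).det =
      (Real.cos (π / u))^4 - 3 * (Real.cos (π / u))^2 + 1 := by
  set c := Real.cos (π / u)
  simp [coxeterSchlafli, Matrix.det_succ_row_zero, Fin.sum_univ_succ, Fin.succAbove]
  ring

private lemma cox_mul (u : ℕ) :
    (coxeterSchlafli u u u) *
      (!![1 - 2*(Real.cos (π / u))^2, Real.cos (π / u) - (Real.cos (π / u))^3,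
          (Real.cos (π / u))^2, (Real.cos (π / u))^3;
          Real.cos (π / u) - (Real.cos (π / u))^3, 1 - (Real.cos (π / u))^2,
          Real.cos (π / u), (Real.cos (π / u))^2;
          (Real.cos (π / u))^2, Real.cos (π / u), 1 - (Real.cos (π / u))^2,
          Real.cos (π / u) - (Real.cos (π / u))^3;
          (Real.cos (π / u))^3, (Real.cos (π / u))^2,
          Real.cos (π / u) - (Real.cos (π / u))^3, 1 - 2*(Real.cos (π / u))^2]) =
      ((Real.cos (π / u))^4 - 3 * (Real.cos (π / u))^2 + 1) • (1 : Matrix (Fin 4) (Fin 4) ℝ) := by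
  set c := Real.cos (π / u)
  ext i j
  fin_cases i <;> fin_cases j <;>
    simp [coxeterSchlafli, Matrix.mul_apply, Fin.sum_univ_four, Matrix.one_apply] <;> ring

theorem coxeterSchlafli_inv_diag (z : ℕ) (hz : 3 ≤ z) :
    IsUnit (coxeterSchlafli (2*z) (2*z) (2*z)).det ∧
    0 < (coxeterSchlafli (2*z) (2*z) (2*z))⁻¹ 0 0 ∧
    0 < (coxeterSchlafli (2*z) (2*z) (2*z))⁻¹ 3 3 ∧
    (coxeterSchlafli (2*z) (2*z) (2*z))⁻¹ 1 1 < 0 ∧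
    (coxeterSchlafli (2*z) (2*z) (2*z))⁻¹ 2 2 < 0 := by
  set u := 2 * z with hu
  set c := Real.cos (π / u) with hc
  have hzpos : (0:ℝ) < z := by positivity
  have hupos : (0:ℝ) < u := by positivity
  -- bounds on c
  have hangle_pos : 0 < π / u := by positivity
  have hangle_le : π / u ≤ π / 6 := by
    apply div_le_div_of_nonneg_left pi_pos.le (by norm_num)
    have : (6:ℝ) ≤ z * 2 := by
      have : (3:ℝ) ≤ z := by exact_mod_cast hz
      linarith
    simpa [hu] using this.trans_eq (by push_cast [hu, mul_comm]; ring)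
  have hc_lt : c < 1 := by
    have hle : π / u ≤ π := by
      apply div_le_self pi_pos.le
      have : (3:ℝ) ≤ z := by exact_mod_cast hz
      simp only [hu]; push_cast [hu]; linarith
    have := Real.cos_lt_cos_of_nonneg_of_le_pi le_rfl hle hangle_pos
    simpa [hc] using this
  have hc_ge : Real.sqrt 3 / 2 ≤ c := by
    rw [hc, ← Real.cos_pi_div_six]
    apply Real.cos_le_cos_of_nonneg_of_le_pi (by positivity)
      (by linarith [Real.pi_pos]) hangle_le
  have h3 : (1.7:ℝ) ≤ Real.sqrt 3 := by
    rw [show (3:ℝ) = 1.7^2 + 0.11 by norm_num]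
    nlinarith [Real.sq_sqrt (by norm_num : (0:ℝ) ≤ 1.7^2 + 0.11),
      Real.sqrt_nonneg (1.7^2 + (0.11:ℝ))]
  have hc85 : (0.85:ℝ) ≤ c := by linarith
  have hcsq : (0.7:ℝ) ≤ c^2 := by nlinarith
  set d := c^4 - 3*c^2 + 1 with hd
  have hc2lt : c^2 < 1 := by nlinarith
  have hc4 : c^4 ≤ c^2 := by
    nlinarith [mul_nonneg (by linarith : (0:ℝ) ≤ 1 - c^2) (by linarith : (0:ℝ) ≤ c^2)]
  have hd_neg : d < 0 := by rw [hd]; linarith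
  have hd_ne : d ≠ 0 := ne_of_lt hd_neg
  have hdet : (coxeterSchlafli u u u).det = d := cox_det u
  have hunit : IsUnit (coxeterSchlafli u u u).det := by
    rw [hdet]; exact isUnit_iff_ne_zero.mpr hd_ne
  have hinv : (coxeterSchlafli u u u)⁻¹ =
      d⁻¹ • (!![1 - 2*c^2, c - c^3, c^2, c^3;
                c - c^3, 1 - c^2, c, c^2;
                c^2, c, 1 - c^2, c - c^3;
                c^3, c^2, c - c^3, 1 - 2*c^2]) := by
    apply Matrix.inv_eq_right_inv
    rw [Matrix.mul_smul, cox_mul u, ← hc, ← hd, smul_smul,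
      inv_mul_cancel₀ hd_ne, one_smul]
  refine ⟨hunit, ?_, ?_, ?_, ?_⟩ <;> rw [hinv] <;>
    simp only [Matrix.smul_apply, Matrix.cons_val', Matrix.cons_val_zero, Matrix.cons_val_one,
      Matrix.head_cons, Matrix.empty_val', Matrix.cons_val_fin_one, Matrix.head_fin_const,
      Matrix.cons_val_two, Matrix.cons_val_three, Matrix.tail_cons, smul_eq_mul]
  · have h1 : 1 - 2*c^2 < 0 := by nlinarith
    have := mul_pos_of_neg_of_neg (inv_neg''.mpr hd_neg) h1
    simpa using this
  · have h1 : 1 - 2*c^2 < 0 := by nlinarith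
    have := mul_pos_of_neg_of_neg (inv_neg''.mpr hd_neg) h1
    simpa using this
  · have h1 : 0 < 1 - c^2 := by nlinarith
    have := mul_neg_of_neg_of_pos (inv_neg''.mpr hd_neg) h1
    simpa using this
  · have h1 : 0 < 1 - c^2 := by nlinarith
    have := mul_neg_of_neg_of_pos (inv_neg''.mpr hd_neg) h1
    simpa using this
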